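/- arXiv:2108.00025 — 2 statements merged into one kernel-verified Lean document; each statement's English description precedes it below -/
import Mathlib

section
/- Let A and A' be unital C*-algebras, P₁ a nontrivial symmetric projection in A, P₂ = I_A − P₁, A_{jk} = P_j A P_k, and suppose A satisfies (♠): for j ∈ {1,2}, P_j A X = {0} implies X = 0. Fix an integer n ≥ 2 and let φ: A → A' be a bijective map with φ(I_A) = I_{A'} satisfying (•): φ(p_{n*}(A,B,Ξ,…,Ξ)) = p_{n*}(φ(A),φ(B),φ(Ξ),…,φ(Ξ)) for all A, B ∈ A and Ξ ∈ {P₁, P₂, I_A}. Then for j ∈ {1,2} and any A_{jj}, B_{jj} ∈ A_{jj} one has φ(A_{jj} + B_{jj}) = φ(A_{jj}) + φ(B_{jj}). -/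
/-- The `*`-Lie product `[x,y]_* = xy - y x*`. -/
def starLie {R : Type*} [Ring R] [StarRing R] (x y : R) : R := x * y - y * star x

/-- `pn n a b xi = p_{n*}(a, b, xi, ..., xi)` (with `n - 2` trailing copies of `xi`). -/
def pn {R : Type*} [Ring R] [StarRing R] (n : ℕ) (a b ξ : R) : R :=
  (fun z => starLie z ξ)^[n - 2] (starLie a b)

section AuxStarLie
set_option linter.unusedSectionVars false

variable {R : Type*} [Ring R] [StarRing R]

lemma mul_absorb {a b c : R} (h : a * b = c) (x : R) : a * (b * x) = c * x := by
  rw [← mul_assoc, h]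

lemma starLie_add_left (u v ξ : R) : starLie (u + v) ξ = starLie u ξ + starLie v ξ := by
  simp only [starLie, add_mul, star_add, mul_add]
  abel

lemma starLie_add_right (x u v : R) : starLie x (u + v) = starLie x u + starLie x v := by
  simp only [starLie, mul_add, add_mul]
  abel

lemma starLie_zero_left (y : R) : starLie (0 : R) y = 0 := by
  simp [starLie]

lemma starLie_zero_right (x : R) : starLie x (0 : R) = 0 := by
  simp [starLie]

lemma pn_of_starLie_zero (n : ℕ) (x y ξ : R) (h : starLie x y = 0) : pn n x y ξ = 0 := by
  simp only [pn, h]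
  exact Function.iterate_fixed (f := fun z => starLie z ξ) (starLie_zero_left ξ) (n - 2)

lemma pn_zero_left (n : ℕ) (y ξ : R) : pn n 0 y ξ = 0 :=
  pn_of_starLie_zero n 0 y ξ (starLie_zero_left y)

lemma pn_zero_right (n : ℕ) (x ξ : R) : pn n x 0 ξ = 0 :=
  pn_of_starLie_zero n x 0 ξ (starLie_zero_right x)

lemma pn_congr (n : ℕ) (x y x' y' ξ : R) (h : starLie x y = starLie x' y') :
    pn n x y ξ = pn n x' y' ξ := by
  simp only [pn, h]

lemma pn_add_right (n : ℕ) (x u v ξ : R) :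
    pn n x (u + v) ξ = pn n x u ξ + pn n x v ξ := by
  simp only [pn, starLie_add_right]
  generalize starLie x u = s
  generalize starLie x v = t
  generalize n - 2 = m
  induction m generalizing s t with
  | zero => rfl
  | succ m ih =>
    simp only [Function.iterate_succ_apply]
    rw [starLie_add_left]
    exact ih _ _

lemma pn_corner (e f : R) (he : e * e = e) (hfe : f * e = 0) (n : ℕ) (x y : R) :
    f * pn n x y e * e = f * starLie x y * e := by
  have key : ∀ w : R, f * starLie w e * e = f * w * e := by
    intro w
    rw [starLie, mul_sub, sub_mul]
    have t1 : f * (w * e) * e = f * w * e := by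
      rw [← mul_assoc f w e, mul_assoc (f * w) e e, he]
    have t2 : f * (e * star w) * e = 0 := by
      rw [← mul_assoc, hfe, zero_mul, zero_mul]
    rw [t1, t2, sub_zero]
  suffices h : ∀ (m : ℕ) (z : R), f * ((fun w => starLie w e)^[m] z) * e = f * z * e by
    simpa [pn] using h (n - 2) (starLie x y)
  intro m
  induction m with
  | zero => intro z; rfl
  | succ m ih =>
    intro z
    rw [Function.iterate_succ_apply']
    exact (key _).trans (ih z)

lemma pn_ann (e : R) (hes : star e = e) (n : ℕ) (x y : R)
    (h1 : e * starLie x y = 0) (h2 : starLie x y * e = 0) :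
    e * pn n x y e = 0 ∧ pn n x y e * e = 0 := by
  suffices h : ∀ (m : ℕ) (z : R), e * z = 0 → z * e = 0 →
      e * ((fun w => starLie w e)^[m] z) = 0 ∧ ((fun w => starLie w e)^[m] z) * e = 0 by
    simpa [pn] using h (n - 2) (starLie x y) h1 h2
  intro m
  induction m with
  | zero => intro z hz1 hz2; exact ⟨hz1, hz2⟩
  | succ m ih =>
    intro z hz1 hz2
    rw [Function.iterate_succ_apply]
    have h3 : e * star z = 0 := by
      have := congrArg star hz2
      rwa [star_mul, hes, star_zero] at this
    apply ih
    · rw [starLie, mul_sub, ← mul_assoc, hz1, zero_mul, h3, mul_zero, sub_zero]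
    · rw [starLie, sub_mul, hz2, zero_mul, h3, zero_mul, sub_zero]

end AuxStarLie

section AuxPhi

lemma phi_zero {A A' : Type*} [Ring A] [StarRing A] [Ring A'] [StarRing A']
    (n : ℕ) (φ : A → A') (hsurj : Function.Surjective φ) (ξ : A)
    (hb : ∀ a b : A, φ (pn n a b ξ) = pn n (φ a) (φ b) (φ ξ)) : φ 0 = 0 := by
  obtain ⟨w, hw⟩ := hsurj 0
  have h := hb 0 w
  rw [hw, pn_zero_left, pn_zero_right] at h
  exact h

end AuxPhi

section Main

set_option linter.unusedSectionVars false
set_option maxHeartbeats 1000000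

variable {A A' : Type*} [Ring A] [StarRing A] [Ring A'] [StarRing A']

theorem killOff
    (P Q : A) (hP : P * P = P) (hPs : star P = P) (hQ : Q * Q = Q) (hQs : star Q = Q)
    (hPQ : P * Q = 0) (hQP : Q * P = 0)
    (hspP : ∀ X : A, (∀ Y : A, P * Y * X = 0) → X = 0)
    (hspQ : ∀ X : A, (∀ Y : A, Q * Y * X = 0) → X = 0)
    (n : ℕ) (φ : A → A') (hinj : Function.Injective φ) (hφ0 : φ 0 = 0)
    (hbP : ∀ a b : A, φ (pn n a b P) = pn n (φ a) (φ b) (φ P))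
    (hbQ : ∀ a b : A, φ (pn n a b Q) = pn n (φ a) (φ b) (φ Q))
    (u v S N : A) (hu1 : Q * u = 0) (hu2 : u * Q = 0)
    (hS : φ S = φ u + φ v) (hN : S = u + (v + N)) :
    Q * (N * P) = 0 ∧ P * (N * Q) = 0 ∧ Q * (N * Q) = 0 := by
  have hone : ∀ ξ : A, (∀ a b : A, φ (pn n a b ξ) = pn n (φ a) (φ b) (φ ξ)) →
      ∀ C : A, starLie C u = 0 → pn n C N ξ = 0 := by
    intro ξ hb C h0
    have h0' : pn n C u ξ = 0 := pn_of_starLie_zero n C u ξ h0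
    have hr : φ (pn n C S ξ) = φ (pn n C u ξ) + φ (pn n C v ξ) := by
      rw [hb, hS, pn_add_right, ← hb, ← hb]
    rw [h0', hφ0, zero_add] at hr
    have hr2 := hinj hr
    have hdec : pn n C S ξ = pn n C u ξ + (pn n C v ξ + pn n C N ξ) := by
      conv_lhs => rw [hN]
      rw [pn_add_right, pn_add_right]
    rw [h0', zero_add, hr2] at hdec
    exact left_eq_add.mp hdec
  have hCu1 : ∀ c : A, starLie (Q * c * Q) u = 0 := by
    intro c
    simp [starLie, star_mul, hQs, mul_assoc, hu1, mul_absorb hu2]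
  have hCu2 : ∀ c : A, starLie (P * c * Q) u = 0 := by
    intro c
    simp [starLie, star_mul, hQs, hPs, mul_assoc, hu1, mul_absorb hu2]
  have k1 : Q * (N * P) = 0 := by
    apply hspQ
    intro Y
    rw [mul_assoc]
    have h0 := hone P hbP (Q * Y * Q) (hCu1 Y)
    have hc := pn_corner P Q hP hQP n (Q * Y * Q) N
    rw [h0, mul_zero, zero_mul] at hc
    have halg : Q * starLie (Q * Y * Q) N * P = Q * (Y * (Q * (N * P))) := by
      simp [starLie, star_mul, hQs, mul_assoc, hP, hQ, mul_absorb hQ, mul_absorb hQP, hQP,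
        mul_sub, sub_mul]
    rw [← halg]
    exact hc.symm
  have k2 : P * (N * Q) = 0 := by
    have main : ∀ c : A, Q * (c * (Q * (star N * P))) = 0 := by
      intro c
      have h0 := hone Q hbQ (Q * c * Q) (hCu1 c)
      have hc := pn_corner Q P hQ hPQ n (Q * c * Q) N
      rw [h0, mul_zero, zero_mul] at hc
      have halg : P * starLie (Q * c * Q) N * Q = -(P * (N * (Q * (star c * Q)))) := by
        simp [starLie, star_mul, hQs, mul_assoc, hQ, mul_absorb hQ, mul_absorb hPQ, hPQ,
          mul_sub, sub_mul]
      rw [halg] at hc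
      have h1 : P * (N * (Q * (star c * Q))) = 0 := neg_eq_zero.mp hc.symm
      have h2 := congrArg star h1
      simpa [star_mul, hQs, hPs, star_star, mul_assoc] using h2
    have hsN : Q * (star N * P) = 0 := hspQ _ (fun Y => by rw [mul_assoc]; exact main Y)
    have h3 := congrArg star hsN
    simpa [star_mul, hQs, hPs, star_star, mul_assoc] using h3
  have k3 : Q * (N * Q) = 0 := by
    apply hspP
    intro Y
    rw [mul_assoc]
    have h0 := hone Q hbQ (P * Y * Q) (hCu2 Y)
    have hc := pn_corner Q P hQ hPQ n (P * Y * Q) N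
    rw [h0, mul_zero, zero_mul] at hc
    have halg : P * starLie (P * Y * Q) N * Q = P * (Y * (Q * (N * Q))) := by
      simp [starLie, star_mul, hQs, hPs, mul_assoc, hP, hQ, mul_absorb hP, mul_absorb hPQ,
        hPQ, mul_sub, sub_mul]
    rw [← halg]
    exact hc.symm
  exact ⟨k1, k2, k3⟩

theorem masterL2
    (P Q : A) (hP : P * P = P) (hPs : star P = P) (hQ : Q * Q = Q) (hQs : star Q = Q)
    (hPQ : P * Q = 0) (hQP : Q * P = 0) (hPQ1 : P + Q = 1)
    (hspP : ∀ X : A, (∀ Y : A, P * Y * X = 0) → X = 0)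
    (hspQ : ∀ X : A, (∀ Y : A, Q * Y * X = 0) → X = 0)
    (n : ℕ) (φ : A → A') (hbij : Function.Bijective φ)
    (hbP : ∀ a b : A, φ (pn n a b P) = pn n (φ a) (φ b) (φ P))
    (hbQ : ∀ a b : A, φ (pn n a b Q) = pn n (φ a) (φ b) (φ Q))
    (x' y1 y2 : A) :
    φ (P * x' * P + (P * y1 * Q + Q * y2 * P))
      = φ (P * x' * P) + φ (P * y1 * Q + Q * y2 * P) := by
  have hφ0 : φ 0 = 0 := phi_zero n φ hbij.2 P hbP
  set u := P * x' * P with hu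
  set v := P * y1 * Q + Q * y2 * P with hv
  set S := Function.surjInv hbij.2 (φ u + φ v) with hSdef
  have hS : φ S = φ u + φ v := Function.surjInv_eq hbij.2 _
  set N := S - u - v with hNdef
  have hN : S = u + (v + N) := by rw [hNdef]; abel
  have hu1 : Q * u = 0 := by
    simp [hu, mul_assoc, mul_absorb hQP]
  have hu2 : u * Q = 0 := by
    simp [hu, mul_assoc, hPQ]
  obtain ⟨k1, k2, k3⟩ := killOff P Q hP hPs hQ hQs hPQ hQP hspP hspQ n φ hbij.1 hφ0
    hbP hbQ u v S N hu1 hu2 hS hN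
  have hNfull : N = P * (N * P) := by
    have h4 : N = P * (N * P) + (P * (N * Q) + (Q * (N * P) + Q * (N * Q))) := by
      have h5 : N = (P + Q) * N * (P + Q) := by rw [hPQ1, one_mul, mul_one]
      conv_lhs => rw [h5]
      simp only [add_mul, mul_add, mul_assoc]
      abel
    rw [k1, k2, k3, add_zero, add_zero, add_zero] at h4
    exact h4
  have hPN : P * N = N := by
    conv_lhs => rw [hNfull]
    rw [← mul_assoc, hP, ← hNfull]
  have hNP : N * P = N := by
    conv_lhs => rw [hNfull]
    simp only [mul_assoc, hP]
    exact hNfull.symm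
  have key : ∀ c : A, Q * (c * N) = 0 := by
    intro c
    have hzk1 : P * starLie (Q * c * P) v = 0 := by
      simp [hv, starLie, star_mul, star_add, hQs, hPs, mul_assoc, mul_add, add_mul,
        mul_sub, sub_mul, hP, hQ, hPQ, hQP, mul_absorb hP, mul_absorb hQ,
        mul_absorb hPQ, mul_absorb hQP]
    have hzk2 : starLie (Q * c * P) v * P = 0 := by
      simp [hv, starLie, star_mul, star_add, hQs, hPs, mul_assoc, mul_add, add_mul,
        mul_sub, sub_mul, hP, hQ, hPQ, hQP, mul_absorb hP, mul_absorb hQ,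
        mul_absorb hPQ, mul_absorb hQP]
    obtain ⟨hk1, hk2⟩ := pn_ann P hPs n (Q * c * P) v hzk1 hzk2
    have hslPk : starLie P (pn n (Q * c * P) v P) = 0 := by
      rw [starLie, hPs, hk1, hk2]
      simp
    have hpnPk : pn n P (pn n (Q * c * P) v P) P = 0 :=
      pn_of_starLie_zero n _ _ _ hslPk
    have r1 : φ (pn n (Q * c * P) S P)
        = φ (pn n (Q * c * P) u P) + φ (pn n (Q * c * P) v P) := by
      rw [hbP, hS, pn_add_right, ← hbP, ← hbP]
    have r2 : φ (pn n P (pn n (Q * c * P) S P) P)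
        = φ (pn n P (pn n (Q * c * P) u P) P) + φ (pn n P (pn n (Q * c * P) v P) P) := by
      rw [hbP, r1, pn_add_right, ← hbP, ← hbP]
    rw [hpnPk, hφ0, add_zero] at r2
    have r3 := hbij.1 r2
    have hdec : pn n (Q * c * P) S P
        = pn n (Q * c * P) u P + (pn n (Q * c * P) v P + pn n (Q * c * P) N P) := by
      conv_lhs => rw [hN]
      rw [pn_add_right, pn_add_right]
    have r4 : pn n P (pn n (Q * c * P) S P) P
        = pn n P (pn n (Q * c * P) u P) P
          + (pn n P (pn n (Q * c * P) v P) P + pn n P (pn n (Q * c * P) N P) P) := by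
      rw [hdec, pn_add_right, pn_add_right]
    rw [r3, hpnPk, zero_add] at r4
    have r5 : pn n P (pn n (Q * c * P) N P) P = 0 := left_eq_add.mp r4
    have e1 : Q * starLie P (pn n (Q * c * P) N P) * P = 0 := by
      have hc := pn_corner P Q hP hQP n P (pn n (Q * c * P) N P)
      rw [r5, mul_zero, zero_mul] at hc
      exact hc.symm
    have e2 : Q * pn n (Q * c * P) N P * P = 0 := by
      have t1 : Q * (P * pn n (Q * c * P) N P) * P = 0 := by
        rw [← mul_assoc, hQP, zero_mul, zero_mul]
      have t2 : Q * (pn n (Q * c * P) N P * P) * P = Q * pn n (Q * c * P) N P * P := by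
        rw [mul_assoc, mul_assoc, hP, ← mul_assoc]
      rw [starLie, hPs, mul_sub, sub_mul, t1, t2, zero_sub, neg_eq_zero] at e1
      exact e1
    have e3 : Q * starLie (Q * c * P) N * P = 0 :=
      (pn_corner P Q hP hQP n (Q * c * P) N).symm.trans e2
    have halg : Q * starLie (Q * c * P) N * P = Q * (c * N) := by
      simp [starLie, star_mul, hQs, hPs, mul_assoc, mul_sub, sub_mul, hP, hQ, hPQ, hQP,
        mul_absorb hQ, mul_absorb hP, mul_absorb hQP, mul_absorb hPQ, hPN, hNP]
    rw [halg] at e3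
    exact e3
  have hN0 : N = 0 := hspQ N (fun Y => by rw [mul_assoc]; exact key Y)
  have hfin : S = u + v := by rw [hN, hN0, add_zero]
  rw [← hfin]
  exact hS

theorem masterAdd
    (P Q : A) (hP : P * P = P) (hPs : star P = P) (hQ : Q * Q = Q) (hQs : star Q = Q)
    (hPQ : P * Q = 0) (hQP : Q * P = 0) (hPQ1 : P + Q = 1)
    (hspP : ∀ X : A, (∀ Y : A, P * Y * X = 0) → X = 0)
    (hspQ : ∀ X : A, (∀ Y : A, Q * Y * X = 0) → X = 0)
    (n : ℕ) (φ : A → A') (hbij : Function.Bijective φ)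
    (hbP : ∀ a b : A, φ (pn n a b P) = pn n (φ a) (φ b) (φ P))
    (hbQ : ∀ a b : A, φ (pn n a b Q) = pn n (φ a) (φ b) (φ Q))
    (x y : A) :
    φ (P * x * P + P * y * P) = φ (P * x * P) + φ (P * y * P) := by
  have hφ0 : φ 0 = 0 := phi_zero n φ hbij.2 P hbP
  set a := P * x * P with ha
  set b := P * y * P with hb
  set T := Function.surjInv hbij.2 (φ a + φ b) with hTdef
  have hT : φ T = φ a + φ b := Function.surjInv_eq hbij.2 _
  set M := T - a - b with hMdef
  have hTd : T = a + (b + M) := by rw [hMdef]; abel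
  have hTd' : T = a + b + M := by rw [hMdef]; abel
  have ha1 : Q * a = 0 := by
    simp [ha, mul_assoc, mul_absorb hQP]
  have ha2 : a * Q = 0 := by
    simp [ha, mul_assoc, hPQ]
  obtain ⟨k1, k2, k3⟩ := killOff P Q hP hPs hQ hQs hPQ hQP hspP hspQ n φ hbij.1 hφ0
    hbP hbQ a b T M ha1 ha2 hT hTd
  have hMfull : M = P * (M * P) := by
    have h4 : M = P * (M * P) + (P * (M * Q) + (Q * (M * P) + Q * (M * Q))) := by
      have h5 : M = (P + Q) * M * (P + Q) := by rw [hPQ1, one_mul, mul_one]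
      conv_lhs => rw [h5]
      simp only [add_mul, mul_add, mul_assoc]
      abel
    rw [k1, k2, k3, add_zero, add_zero, add_zero] at h4
    exact h4
  have hPM : P * M = M := by
    conv_lhs => rw [hMfull]
    rw [← mul_assoc, hP, ← hMfull]
  have hMP : M * P = M := by
    conv_lhs => rw [hMfull]
    simp only [mul_assoc, hP]
    exact hMfull.symm
  have hQM : Q * M = 0 := by
    conv_lhs => rw [hMfull]
    rw [← mul_assoc, hQP, zero_mul]
  have hMQ : M * Q = 0 := by
    conv_lhs => rw [hMfull]
    simp only [mul_assoc, hPQ, mul_zero]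
  have key : ∀ c : A, Q * (c * M) = 0 := by
    intro c
    have hL2 := masterL2 P Q hP hPs hQ hQs hPQ hQP hPQ1 hspP hspQ n φ hbij hbP hbQ
      x (y * (P * star c)) (c * (P * y))
    rw [← ha] at hL2
    have hbw : starLie (Q * c * P + Q) b
        = starLie (Q * c * P + Q) (P * (y * (P * star c)) * Q + Q * (c * (P * y)) * P) := by
      simp only [hb, starLie, star_mul, star_add, hQs, hPs, star_star, mul_assoc,
        mul_add, add_mul, mul_sub, sub_mul, hP, hQ, hPQ, hQP,
        mul_absorb hP, mul_absorb hQ, mul_absorb hPQ, mul_absorb hQP,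
        mul_zero, zero_mul, add_zero, zero_add, sub_zero, zero_sub]
      abel
    have r1 : φ (pn n (Q * c * P + Q) T P)
        = φ (pn n (Q * c * P + Q) a P) + φ (pn n (Q * c * P + Q) b P) := by
      rw [hbP, hT, pn_add_right, ← hbP, ← hbP]
    have r2 : pn n (Q * c * P + Q) b P
        = pn n (Q * c * P + Q) (P * (y * (P * star c)) * Q + Q * (c * (P * y)) * P) P :=
      pn_congr n _ _ _ _ P hbw
    have r3 : φ (pn n (Q * c * P + Q) a P)
          + φ (pn n (Q * c * P + Q) (P * (y * (P * star c)) * Q + Q * (c * (P * y)) * P) P)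
        = φ (pn n (Q * c * P + Q)
            (a + (P * (y * (P * star c)) * Q + Q * (c * (P * y)) * P)) P) := by
      rw [hbP, hbP, ← pn_add_right, ← hL2, ← hbP]
    have r4 : pn n (Q * c * P + Q) T P
        = pn n (Q * c * P + Q)
            (a + (P * (y * (P * star c)) * Q + Q * (c * (P * y)) * P)) P :=
      hbij.1 (by rw [r1, r2, r3])
    have r5 : pn n (Q * c * P + Q)
          (a + (P * (y * (P * star c)) * Q + Q * (c * (P * y)) * P)) P
        = pn n (Q * c * P + Q) (a + b) P := by
      apply pn_congr
      rw [starLie_add_right, ← hbw, ← starLie_add_right]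
    have r6 : pn n (Q * c * P + Q) T P
        = pn n (Q * c * P + Q) (a + b) P + pn n (Q * c * P + Q) M P := by
      conv_lhs => rw [hTd']
      rw [pn_add_right]
    rw [r4, r5] at r6
    have r7 : pn n (Q * c * P + Q) M P = 0 := left_eq_add.mp r6
    have e1 : Q * starLie (Q * c * P + Q) M * P = 0 := by
      have hc := pn_corner P Q hP hQP n (Q * c * P + Q) M
      rw [r7, mul_zero, zero_mul] at hc
      exact hc.symm
    have halg : Q * starLie (Q * c * P + Q) M * P = Q * (c * M) := by
      simp [starLie, star_mul, star_add, hQs, hPs, mul_assoc, mul_add, add_mul,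
        mul_sub, sub_mul, hP, hQ, hPQ, hQP, mul_absorb hQ, mul_absorb hP,
        mul_absorb hQP, mul_absorb hPQ, hPM, hMP, hQM, hMQ]
    rw [halg] at e1
    exact e1
  have hM0 : M = 0 := hspQ M (fun Y => by rw [mul_assoc]; exact key Y)
  have hfin : T = a + b := by rw [hTd', hM0, add_zero]
  rw [← hfin]
  exact hT

end Main

set_option linter.unusedSectionVars false
set_option linter.unusedVariables false

variable {A A' : Type*}
  [NormedRing A] [StarRing A] [CStarRing A] [NormedAlgebra ℂ A]
  [CompleteSpace A] [StarModule ℂ A]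
  [NormedRing A'] [StarRing A'] [CStarRing A'] [NormedAlgebra ℂ A']
  [CompleteSpace A'] [StarModule ℂ A']

theorem stmt8
    (P₁ : A) (hP₁proj : P₁ * P₁ = P₁) (hP₁star : star P₁ = P₁)
    (hP₁ne0 : P₁ ≠ 0) (hP₁ne1 : P₁ ≠ 1)
    (P₂ : A) (hP₂ : P₂ = 1 - P₁)
    (hspade : ∀ Pj ∈ ({P₁, P₂} : Set A), ∀ X : A, (∀ Y : A, Pj * Y * X = 0) → X = 0)
    (n : ℕ) (hn : 2 ≤ n)
    (φ : A → A') (hbij : Function.Bijective φ) (hunit : φ 1 = 1)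
    (hbullet : ∀ a b : A, ∀ Ξ ∈ ({P₁, P₂, 1} : Set A),
      φ (pn n a b Ξ) = pn n (φ a) (φ b) (φ Ξ))
    :
    ∀ Pj ∈ ({P₁, P₂} : Set A),
      ∀ a b : A, (∃ x : A, a = Pj * x * Pj) → (∃ y : A, b = Pj * y * Pj) →
        φ (a + b) = φ a + φ b := by
  intro Pj hPj a b hax hby
  obtain ⟨x, rfl⟩ := hax
  obtain ⟨y, rfl⟩ := hby
  have hP2P : P₂ * P₂ = P₂ := by
    rw [hP₂]
    simp [sub_mul, mul_sub, hP₁proj]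
  have hP2s : star P₂ = P₂ := by
    rw [hP₂, star_sub, star_one, hP₁star]
  have h12 : P₁ * P₂ = 0 := by
    rw [hP₂, mul_sub, mul_one, hP₁proj, sub_self]
  have h21 : P₂ * P₁ = 0 := by
    rw [hP₂, sub_mul, one_mul, hP₁proj, sub_self]
  have hsum : P₁ + P₂ = 1 := by rw [hP₂]; abel
  have hsum' : P₂ + P₁ = 1 := by rw [hP₂]; abel
  have hsp1 : ∀ X : A, (∀ Y : A, P₁ * Y * X = 0) → X = 0 := hspade P₁ (by simp)
  have hsp2 : ∀ X : A, (∀ Y : A, P₂ * Y * X = 0) → X = 0 := hspade P₂ (by simp)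
  have hb1 : ∀ u v : A, φ (pn n u v P₁) = pn n (φ u) (φ v) (φ P₁) :=
    fun u v => hbullet u v P₁ (by simp)
  have hb2 : ∀ u v : A, φ (pn n u v P₂) = pn n (φ u) (φ v) (φ P₂) :=
    fun u v => hbullet u v P₂ (by simp)
  simp only [Set.mem_insert_iff, Set.mem_singleton_iff] at hPj
  rcases hPj with rfl | rfl
  · exact masterAdd Pj P₂ hP₁proj hP₁star hP2P hP2s h12 h21 hsum hsp1 hsp2 n φ hbij
      hb1 hb2 x y
  · exact masterAdd Pj P₁ hP2P hP2s hP₁proj hP₁star h21 h12 hsum' hsp2 hsp1 n φ hbij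
      hb2 hb1 x y
end

section
/- Let A and A' be unital C*-algebras, P₁ a nontrivial symmetric projection in A, P₂ = I_A − P₁, A_{jk} = P_j A P_k, and suppose A satisfies (♠): for j ∈ {1,2}, P_j A X = {0} implies X = 0. Fix an integer n ≥ 2 and let φ: A → A' be a bijective map with φ(I_A) = I_{A'}, φ(λA) = λφ(A) for all λ ∈ ℂ, satisfying (•): φ(p_{n*}(A,B,Ξ,…,Ξ)) = p_{n*}(φ(A),φ(B),φ(Ξ),…,φ(Ξ)) for all A, B ∈ A and Ξ ∈ {P₁, P₂, I_A}. Then for j ≠ k in {1,2}, any A_{jk} ∈ A_{jk} and B_{kk} ∈ A_{kk} satisfy φ(A_{jk} B_{kk}) = φ(A_{jk})φ(B_{kk}). -/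
private lemma smul_cancel {M : Type*} [AddCommGroup M] [Module ℂ M] {c : ℂ} (hc : c ≠ 0)
    {x y : M} (h : c • x = c • y) : x = y := by
  have h2 := congrArg (fun z => c⁻¹ • z) h
  simpa [smul_smul, inv_mul_cancel₀ hc] using h2

private lemma add_self_cancel {M : Type*} [AddCommGroup M] [Module ℂ M]
    {x y : M} (h : x + x = y + y) : x = y := by
  refine smul_cancel (c := (2:ℂ)) (by norm_num) ?_
  rw [two_smul, two_smul]; exact h

private lemma iter_skew {R : Type*} [Ring R] [StarRing R] [Module ℂ R] [StarModule ℂ R]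
    (N : ℕ) (z : R) (hz : star z = -z) :
    (fun w => starLie w 1)^[N] z = ((2:ℂ)^N) • z := by
  induction N with
  | zero => simp
  | succ N ih =>
    rw [Function.iterate_succ_apply', ih]
    have hs : star (((2:ℂ)^N) • z) = ((2:ℂ)^N) • -z := by
      rw [star_smul, hz]
      congr 1
      simp
    simp only [starLie, mul_one, one_mul, hs]
    rw [pow_succ]
    module

private lemma iter_one {R : Type*} [Ring R] [StarRing R] [Module ℂ R] [StarModule ℂ R]
    (N : ℕ) (z : R) :
    (fun w => starLie w 1)^[N + 1] z = ((2:ℂ)^N) • (z - star z) := by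
  rw [Function.iterate_succ_apply]
  have h1 : starLie z (1:R) = z - star z := by simp [starLie]
  rw [h1]
  exact iter_skew N _ (by rw [star_sub, star_star]; abel)

private lemma sym_eq {R : Type*} [Ring R] [StarRing R] (x y : R) :
    starLie x y - star (starLie x y) = x*y + x*star y - y*star x - star y*star x := by
  simp only [starLie, star_sub, star_mul, star_star]
  abel

private lemma star_pres {A A' : Type*} [Ring A] [StarRing A] [AddCommGroup A'] [Module ℂ A']
    [StarAddMonoid A']
    (φ : A → A') (hneg : ∀ x : A, φ (-x) = -φ x)
    (hB : ∀ u : A, φ (u - star u) = φ u - star (φ u))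
    (hB' : ∀ u : A, φ (u + star u) = φ u + star (φ u)) :
    ∀ u : A, φ (star u) = star (φ u) := by
  intro u
  have h1 : φ (star u) - star (φ (star u)) = star (φ u) - φ u := by
    have h := hB (star u)
    rw [star_star, show star u - u = -(u - star u) by abel, hneg, hB] at h
    rw [← h]; abel
  have h2 : φ (star u) + star (φ (star u)) = φ u + star (φ u) := by
    have h := hB' (star u)
    rw [star_star, add_comm (star u) u, hB'] at h
    exact h.symm
  refine add_self_cancel ?_
  calc φ (star u) + φ (star u)
      = (φ (star u) - star (φ (star u))) + (φ (star u) + star (φ (star u))) := by abel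
    _ = (star (φ u) - φ u) + (φ u + star (φ u)) := by rw [h1, h2]
    _ = star (φ u) + star (φ u) := by abel
variable {A A' : Type*}
  [NormedRing A] [StarRing A] [CStarRing A] [NormedAlgebra ℂ A]
  [CompleteSpace A] [StarModule ℂ A]
  [NormedRing A'] [StarRing A'] [CStarRing A'] [NormedAlgebra ℂ A']
  [CompleteSpace A'] [StarModule ℂ A']

theorem stmt13
    (P₁ : A) (hP₁proj : P₁ * P₁ = P₁) (hP₁star : star P₁ = P₁)
    (hP₁ne0 : P₁ ≠ 0) (hP₁ne1 : P₁ ≠ 1)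
    (P₂ : A) (hP₂ : P₂ = 1 - P₁)
    (hspade : ∀ Pj ∈ ({P₁, P₂} : Set A), ∀ X : A, (∀ Y : A, Pj * Y * X = 0) → X = 0)
    (n : ℕ) (hn : 2 ≤ n)
    (φ : A → A') (hbij : Function.Bijective φ) (hunit : φ 1 = 1)
    (hsmul : ∀ (c : ℂ) (a : A), φ (c • a) = c • φ a)
    (hbullet : ∀ a b : A, ∀ Ξ ∈ ({P₁, P₂, 1} : Set A),
      φ (pn n a b Ξ) = pn n (φ a) (φ b) (φ Ξ))
    :
    ∀ Pj Pk : A, (Pj = P₁ ∧ Pk = P₂) ∨ (Pj = P₂ ∧ Pk = P₁) →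
      ∀ a b : A, (∃ x : A, a = Pj * x * Pk) → (∃ y : A, b = Pk * y * Pk) →
        φ (a * b) = φ a * φ b := by
  rintro Pj Pk hjk a b ⟨x, hx⟩ ⟨y, hy⟩
  -- basic facts about the two projections
  obtain ⟨hPjPj, hPkPk, hPjPk, hPkPj, hsPj, hsPk⟩ :
      Pj*Pj = Pj ∧ Pk*Pk = Pk ∧ Pj*Pk = 0 ∧ Pk*Pj = 0 ∧ star Pj = Pj ∧ star Pk = Pk := by
    rcases hjk with ⟨h1, h2⟩ | ⟨h1, h2⟩ <;> subst h1 <;> subst h2 <;> subst hP₂ <;>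
      refine ⟨?_, ?_, ?_, ?_, ?_, ?_⟩ <;>
      simp [mul_sub, sub_mul, hP₁proj, hP₁star, star_sub]
  -- product facts for a, b
  have hPja : Pj * a = a := by simp only [hx, ← mul_assoc, hPjPj]
  have haPj : a * Pj = 0 := by simp only [hx, mul_assoc, hPkPj, mul_zero]
  have hsa_eq : star a = Pk * (star x * Pj) := by
    rw [hx, star_mul, star_mul, hsPj, hsPk]
  have hPjsa : Pj * star a = 0 := by rw [hsa_eq, ← mul_assoc, hPjPk, zero_mul]
  have hsaPj : star a * Pj = star a := by
    rw [hsa_eq]; simp only [mul_assoc, hPjPj]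
  have hPkb : Pk * b = b := by simp only [hy, ← mul_assoc, hPkPk]
  have hbPk : b * Pk = b := by simp only [hy, mul_assoc, hPkPk]
  have hsb_eq : star b = Pk * (star y * Pk) := by
    rw [hy, star_mul, star_mul, hsPk]
  have hPksb : Pk * star b = star b := by rw [hsb_eq, ← mul_assoc, hPkPk]
  have hsbPk : star b * Pk = star b := by
    rw [hsb_eq]; simp only [mul_assoc, hPkPk]
  have hsba : star b * a = 0 := by
    rw [hsb_eq, hx]
    simp only [mul_assoc, ← mul_assoc Pk Pj, hPkPj, zero_mul, mul_zero]
  have hsab : star a * b = 0 := by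
    rw [hsa_eq, hy]
    simp only [mul_assoc, ← mul_assoc Pj Pk, hPjPk, zero_mul, mul_zero]
  -- trivial consequences of homogeneity
  have h0 : φ 0 = 0 := by simpa using hsmul 0 0
  have hneg : ∀ u : A, φ (-u) = -φ u := by
    intro u; simpa using hsmul (-1) u
  rcases Nat.eq_or_lt_of_le hn with he | h3
  · -- case n = 2
    have REL : ∀ u v : A, φ (u*v - v*star u) = φ u*φ v - φ v*star (φ u) := by
      intro u v
      have h := hbullet u v 1 (by simp)
      have hn2 : n - 2 = 0 := by omega
      rw [pn, pn, hn2] at h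
      simpa [starLie] using h
    have hB : ∀ u : A, φ (u - star u) = φ u - star (φ u) := by
      intro u
      have h := REL u 1
      rw [hunit] at h
      simpa using h
    have hB' : ∀ u : A, φ (u + star u) = φ u + star (φ u) := by
      intro u
      have h := REL (Complex.I • u) 1
      rw [hunit] at h
      rw [show Complex.I • u * (1:A) - 1 * star (Complex.I • u) = Complex.I • (u + star u) from by
        simp [star_smul, Complex.conj_I, smul_add, sub_neg_eq_add]] at h
      rw [hsmul, hsmul] at h
      rw [show Complex.I • φ u * (1:A') - 1 * star (Complex.I • φ u)
            = Complex.I • (φ u + star (φ u)) from by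
        simp [star_smul, Complex.conj_I, smul_add, sub_neg_eq_add]] at h
      exact smul_cancel Complex.I_ne_zero h
    have hE := star_pres φ hneg hB hB'
    -- instance 1 : pair (star b, a)
    have E1 : -φ (a*b) = star (φ b) * φ a - φ a * φ b := by
      have h := REL (star b) a
      rw [hsba, star_star, zero_sub, hneg, hE, star_star] at h
      rw [← h]
    -- instance 2 : pair (I • star b, a)
    have E2 : φ (a*b) = star (φ b) * φ a + φ a * φ b := by
      have h := REL (Complex.I • star b) a
      rw [show Complex.I • star b * a - a * star (Complex.I • star b)
            = Complex.I • (a * b) from by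
        simp [star_smul, Complex.conj_I, smul_mul_assoc, mul_smul_comm, hsba,
          sub_neg_eq_add, star_star]] at h
      rw [hsmul, hsmul, hE] at h
      rw [show Complex.I • star (φ b) * φ a - φ a * star (Complex.I • star (φ b))
            = Complex.I • (star (φ b) * φ a + φ a * φ b) from by
        simp [star_smul, Complex.conj_I, smul_mul_assoc, mul_smul_comm,
          sub_neg_eq_add, star_star, smul_add]] at h
      exact smul_cancel Complex.I_ne_zero h
    have hz : star (φ b) * φ a = 0 := by
      refine add_self_cancel ?_
      calc star (φ b) * φ a + star (φ b) * φ a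
          = (star (φ b) * φ a - φ a * φ b) + (star (φ b) * φ a + φ a * φ b) := by abel
        _ = -φ (a*b) + φ (a*b) := by rw [E1, E2]
        _ = 0 + 0 := by abel
    rw [E2, hz, zero_add]
  · -- case n ≥ 3
    have KEY : ∀ u v : A,
        φ (u*v + u*star v - v*star u - star v*star u) =
          φ u*φ v + φ u*star (φ v) - φ v*star (φ u) - star (φ v)*star (φ u) := by
      intro u v
      obtain ⟨M, hM⟩ : ∃ M, n - 2 = M + 1 := ⟨n - 3, by omega⟩
      have h := hbullet u v 1 (by simp)
      rw [hunit] at h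
      rw [pn, pn, hM, iter_one, iter_one, hsmul] at h
      have h2 := smul_cancel (c := (2:ℂ)^M) (pow_ne_zero _ (by norm_num)) h
      rw [sym_eq, sym_eq] at h2
      exact h2
    have hB : ∀ u : A, φ (u - star u) = φ u - star (φ u) := by
      intro u
      have h := KEY u 1
      rw [hunit] at h
      rw [show u*(1:A) + u*star (1:A) - 1*star u - star (1:A)*star u
            = (2:ℂ)•(u - star u) by simp only [mul_one, one_mul, star_one]; module] at h
      rw [show φ u*(1:A') + φ u*star (1:A') - 1*star (φ u) - star (1:A')*star (φ u)
            = (2:ℂ)•(φ u - star (φ u)) by simp only [mul_one, one_mul, star_one]; module] at h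
      rw [hsmul] at h
      exact smul_cancel (by norm_num) h
    have hB' : ∀ u : A, φ (u + star u) = φ u + star (φ u) := by
      intro u
      have h := KEY (Complex.I • u) 1
      rw [hunit] at h
      rw [show Complex.I • u * (1:A) + Complex.I • u * star (1:A)
            - 1 * star (Complex.I • u) - star (1:A) * star (Complex.I • u)
            = ((2:ℂ) * Complex.I) • (u + star u) from by
        simp only [star_one, mul_one, one_mul, star_smul, Complex.star_def,
          Complex.conj_I, neg_smul, sub_neg_eq_add]
        module] at h
      rw [hsmul, hsmul] at h
      rw [show Complex.I • φ u * (1:A') + Complex.I • φ u * star (1:A')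
            - 1 * star (Complex.I • φ u) - star (1:A') * star (Complex.I • φ u)
            = ((2:ℂ) * Complex.I) • (φ u + star (φ u)) from by
        simp only [star_one, mul_one, one_mul, star_smul, Complex.star_def,
          Complex.conj_I, neg_smul, sub_neg_eq_add]
        module] at h
      exact smul_cancel (mul_ne_zero (by norm_num) Complex.I_ne_zero) h
    have hE := star_pres φ hneg hB hB'
    have hsQj : star (φ Pj) = φ Pj := by rw [← hE, hsPj]
    have hsQk : star (φ Pk) = φ Pk := by rw [← hE, hsPk]
    -- Q's commute
    have hQcomm : φ Pj * φ Pk = φ Pk * φ Pj := by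
      have h := KEY Pj Pk
      rw [hsPj, hsPk, hPjPk, hPkPj, hsQj, hsQk] at h
      rw [show (0:A) + 0 - 0 - 0 = (0:A) from by simp, h0] at h
      rw [show φ Pj * φ Pk + φ Pj * φ Pk - φ Pk * φ Pj - φ Pk * φ Pj
            = (φ Pj * φ Pk + φ Pj * φ Pk) - (φ Pk * φ Pj + φ Pk * φ Pj) from by abel] at h
      exact add_self_cancel (sub_eq_zero.mp h.symm)
    -- Q's anticommute
    have hQanti : φ Pj * φ Pk + φ Pk * φ Pj = 0 := by
      have h := KEY (Complex.I • Pj) Pk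
      rw [show Complex.I • Pj * Pk + Complex.I • Pj * star Pk
            - Pk * star (Complex.I • Pj) - star Pk * star (Complex.I • Pj)
            = (0:A) from by
        simp only [hsPj, hsPk, star_smul, Complex.star_def, Complex.conj_I,
          smul_mul_assoc, mul_smul_comm, neg_smul, mul_neg, sub_neg_eq_add,
          hPjPk, hPkPj, smul_zero, add_zero, zero_add], h0] at h
      rw [hsmul, hsQk] at h
      rw [show Complex.I • φ Pj * φ Pk + Complex.I • φ Pj * φ Pk
            - φ Pk * star (Complex.I • φ Pj) - φ Pk * star (Complex.I • φ Pj)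
            = Complex.I • ((φ Pj * φ Pk + φ Pk * φ Pj) + (φ Pj * φ Pk + φ Pk * φ Pj)) from by
        simp only [hsQj, star_smul, Complex.star_def, Complex.conj_I,
          smul_mul_assoc, mul_smul_comm, neg_smul, mul_neg, sub_neg_eq_add]
        module] at h
      have h2 : Complex.I • (0:A')
          = Complex.I • ((φ Pj * φ Pk + φ Pk * φ Pj) + (φ Pj * φ Pk + φ Pk * φ Pj)) := by
        rw [smul_zero]; exact h
      have h3 := (smul_cancel Complex.I_ne_zero h2).symm
      exact add_self_cancel (y := 0) (by rw [h3, add_zero])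
    have hQjQk : φ Pj * φ Pk = 0 := by
      refine add_self_cancel (y := 0) ?_
      rw [add_zero]
      calc φ Pj * φ Pk + φ Pj * φ Pk = φ Pj * φ Pk + φ Pk * φ Pj := by rw [hQcomm]
        _ = 0 := hQanti
    -- j-relations: image of star a
    have j2' : φ a - star (φ a) =
        φ Pj*star (φ a) + φ Pj*φ a - star (φ a)*φ Pj - φ a*φ Pj := by
      have h := KEY Pj (star a)
      rw [star_star, hsPj, hPjsa, hPja, hsaPj, haPj, zero_add, sub_zero, hB] at h
      rw [hE, star_star, hsQj] at h
      exact h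
    have j1' : φ a + star (φ a) =
        φ Pj*star (φ a) + φ Pj*φ a + star (φ a)*φ Pj + φ a*φ Pj := by
      have h := KEY (Complex.I • Pj) (star a)
      rw [show Complex.I • Pj * star a + Complex.I • Pj * star (star a)
            - star a * star (Complex.I • Pj) - star (star a) * star (Complex.I • Pj)
            = Complex.I • (a + star a) from by
        simp only [star_star, hsPj, star_smul, Complex.star_def, Complex.conj_I,
          smul_mul_assoc, mul_smul_comm, neg_smul, mul_neg, sub_neg_eq_add,
          hPjsa, hPja, hsaPj, haPj, smul_zero, zero_add, add_zero]
        module] at h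
      rw [hsmul, hsmul, hB'] at h
      rw [hE] at h
      rw [show Complex.I • φ Pj * star (φ a) + Complex.I • φ Pj * star (star (φ a))
            - star (φ a) * star (Complex.I • φ Pj) - star (star (φ a)) * star (Complex.I • φ Pj)
            = Complex.I • (φ Pj*star (φ a) + φ Pj*φ a + star (φ a)*φ Pj + φ a*φ Pj) from by
        simp only [star_star, hsQj, star_smul, Complex.star_def, Complex.conj_I,
          smul_mul_assoc, mul_smul_comm, neg_smul, mul_neg, sub_neg_eq_add]
        module] at h
      exact smul_cancel Complex.I_ne_zero h
    have hUR : star (φ a) = star (φ a)*φ Pj + φ a*φ Pj := by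
      refine add_self_cancel ?_
      calc star (φ a) + star (φ a)
          = (φ a + star (φ a)) - (φ a - star (φ a)) := by abel
        _ = (φ Pj*star (φ a) + φ Pj*φ a + star (φ a)*φ Pj + φ a*φ Pj)
            - (φ Pj*star (φ a) + φ Pj*φ a - star (φ a)*φ Pj - φ a*φ Pj) := by rw [j1', j2']
        _ = (star (φ a)*φ Pj + φ a*φ Pj) + (star (φ a)*φ Pj + φ a*φ Pj) := by abel
    -- k-relations: image of b
    have k2 : φ Pk*φ b + φ Pk*star (φ b) - φ b*φ Pk - star (φ b)*φ Pk = 0 := by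
      have h := KEY Pk b
      rw [hsPk, hPkb, hPksb, hbPk, hsbPk] at h
      rw [show b + star b - b - star b = (0:A) from by abel, h0] at h
      rw [hsQk] at h
      exact h.symm
    have k1 : (φ b + star (φ b)) + (φ b + star (φ b)) =
        φ Pk*φ b + φ Pk*star (φ b) + φ b*φ Pk + star (φ b)*φ Pk := by
      have h := KEY (Complex.I • Pk) b
      rw [show Complex.I • Pk * b + Complex.I • Pk * star b
            - b * star (Complex.I • Pk) - star b * star (Complex.I • Pk)
            = (Complex.I * 2) • (b + star b) from by
        simp only [hsPk, star_smul, Complex.star_def, Complex.conj_I,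
          smul_mul_assoc, mul_smul_comm, neg_smul, mul_neg, sub_neg_eq_add,
          hPkb, hPksb, hbPk, hsbPk]
        module] at h
      rw [← smul_smul, hsmul, hsmul, hsmul, hB'] at h
      rw [show Complex.I • φ Pk * φ b + Complex.I • φ Pk * star (φ b)
            - φ b * star (Complex.I • φ Pk) - star (φ b) * star (Complex.I • φ Pk)
            = Complex.I • (φ Pk*φ b + φ Pk*star (φ b) + φ b*φ Pk + star (φ b)*φ Pk) from by
        simp only [hsQk, star_smul, Complex.star_def, Complex.conj_I,
          smul_mul_assoc, mul_smul_comm, neg_smul, mul_neg, sub_neg_eq_add]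
        module] at h
      have h2 := smul_cancel Complex.I_ne_zero h
      rw [two_smul] at h2
      exact h2
    have k2' : φ Pk*φ b - φ Pk*star (φ b) = φ b*φ Pk - star (φ b)*φ Pk := by
      have h := KEY Pk (Complex.I • b)
      rw [show Pk * (Complex.I • b) + Pk * star (Complex.I • b)
            - Complex.I • b * star Pk - star (Complex.I • b) * star Pk
            = (0:A) from by
        simp only [hsPk, star_smul, Complex.star_def, Complex.conj_I,
          smul_mul_assoc, mul_smul_comm, neg_smul, mul_neg, neg_mul, sub_neg_eq_add,
          hPkb, hPksb, hbPk, hsbPk]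
        module, h0] at h
      rw [hsmul, hsQk] at h
      rw [show φ Pk * (Complex.I • φ b) + φ Pk * star (Complex.I • φ b)
            - Complex.I • φ b * φ Pk - star (Complex.I • φ b) * φ Pk
            = Complex.I • ((φ Pk*φ b - φ Pk*star (φ b)) - (φ b*φ Pk - star (φ b)*φ Pk)) from by
        simp only [star_smul, Complex.star_def, Complex.conj_I,
          smul_mul_assoc, mul_smul_comm, neg_smul, mul_neg, neg_mul, sub_neg_eq_add]
        module] at h
      have h2 : Complex.I • (0:A')
          = Complex.I • ((φ Pk*φ b - φ Pk*star (φ b)) - (φ b*φ Pk - star (φ b)*φ Pk)) := by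
        rw [smul_zero]; exact h
      exact sub_eq_zero.mp (smul_cancel Complex.I_ne_zero h2).symm
    have k1' : (φ b - star (φ b)) + (φ b - star (φ b)) =
        (φ Pk*φ b - φ Pk*star (φ b)) + (φ b*φ Pk - star (φ b)*φ Pk) := by
      have h := KEY (Complex.I • Pk) (Complex.I • b)
      rw [show Complex.I • Pk * (Complex.I • b) + Complex.I • Pk * star (Complex.I • b)
            - Complex.I • b * star (Complex.I • Pk) - star (Complex.I • b) * star (Complex.I • Pk)
            = ((-1 : ℂ) * 2) • (b - star b) from by
        simp only [hsPk, star_smul, Complex.star_def, Complex.conj_I,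
          smul_mul_assoc, mul_smul_comm, smul_smul, neg_smul, smul_neg, mul_neg, neg_mul,
          sub_neg_eq_add, Complex.I_mul_I, neg_neg, one_smul, neg_one_mul,
          hPkb, hPksb, hbPk, hsbPk]
        module] at h
      rw [← smul_smul, hsmul, hsmul, hsmul, hsmul, hB] at h
      rw [show Complex.I • φ Pk * (Complex.I • φ b) + Complex.I • φ Pk * star (Complex.I • φ b)
            - Complex.I • φ b * star (Complex.I • φ Pk)
            - star (Complex.I • φ b) * star (Complex.I • φ Pk)
            = (-1 : ℂ) • ((φ Pk*φ b - φ Pk*star (φ b)) + (φ b*φ Pk - star (φ b)*φ Pk)) from by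
        simp only [hsQk, star_smul, Complex.star_def, Complex.conj_I,
          smul_mul_assoc, mul_smul_comm, smul_smul, neg_smul, smul_neg, mul_neg, neg_mul,
          sub_neg_eq_add, Complex.I_mul_I, neg_neg, one_smul, neg_one_mul]
        module] at h
      have h2 := smul_cancel (c := (-1:ℂ)) (by norm_num) h
      rw [two_smul] at h2
      exact h2
    have hTL : φ b + star (φ b) = φ Pk*φ b + φ Pk*star (φ b) := by
      refine add_self_cancel ?_
      calc (φ b + star (φ b)) + (φ b + star (φ b))
          = φ Pk*φ b + φ Pk*star (φ b) + φ b*φ Pk + star (φ b)*φ Pk := k1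
        _ = (φ Pk*φ b + φ Pk*star (φ b)) + (φ b*φ Pk + star (φ b)*φ Pk) := by abel
        _ = (φ Pk*φ b + φ Pk*star (φ b)) + (φ Pk*φ b + φ Pk*star (φ b)) := by
              congr 1
              have := k2
              calc φ b*φ Pk + star (φ b)*φ Pk
                  = (φ Pk*φ b + φ Pk*star (φ b))
                    - (φ Pk*φ b + φ Pk*star (φ b) - φ b*φ Pk - star (φ b)*φ Pk) := by abel
                _ = φ Pk*φ b + φ Pk*star (φ b) := by rw [k2, sub_zero]
    have hT2L : φ b - star (φ b) = φ Pk*φ b - φ Pk*star (φ b) := by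
      refine add_self_cancel ?_
      calc (φ b - star (φ b)) + (φ b - star (φ b))
          = (φ Pk*φ b - φ Pk*star (φ b)) + (φ b*φ Pk - star (φ b)*φ Pk) := k1'
        _ = (φ Pk*φ b - φ Pk*star (φ b)) + (φ Pk*φ b - φ Pk*star (φ b)) := by rw [← k2']
    have hBqL : φ b = φ Pk * φ b := by
      refine add_self_cancel ?_
      calc φ b + φ b = (φ b + star (φ b)) + (φ b - star (φ b)) := by abel
        _ = (φ Pk*φ b + φ Pk*star (φ b)) + (φ Pk*φ b - φ Pk*star (φ b)) := by rw [hTL, hT2L]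
        _ = φ Pk*φ b + φ Pk*φ b := by abel
    have hQjB : φ Pj * φ b = 0 := by
      rw [hBqL, ← mul_assoc, hQjQk, zero_mul]
    have hUB : star (φ a) * φ b = 0 := by
      rw [hUR, add_mul, mul_assoc, mul_assoc, hQjB, mul_zero, mul_zero, add_zero]
    -- final two instances
    have E1 : -(φ (a*b) - star (φ (a*b))) =
        star (φ b)*φ a + star (φ b)*star (φ a) - φ a*φ b - star (φ a)*φ b := by
      have h := KEY (star b) a
      rw [star_star, hsba, hsab, zero_add, sub_zero, ← star_mul] at h
      rw [show star (a*b) - a*b = -(a*b - star (a*b)) from by abel, hneg, hB] at h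
      rw [hE, star_star] at h
      exact h
    have E2 : φ (a*b) + star (φ (a*b)) =
        star (φ b)*φ a + star (φ b)*star (φ a) + φ a*φ b + star (φ a)*φ b := by
      have h := KEY (Complex.I • star b) a
      rw [show Complex.I • star b * a + Complex.I • star b * star a
            - a * star (Complex.I • star b) - star a * star (Complex.I • star b)
            = Complex.I • (a*b + star (a*b)) from by
        simp only [star_star, star_smul, Complex.star_def, Complex.conj_I, star_mul,
          smul_mul_assoc, mul_smul_comm, neg_smul, mul_neg, neg_mul, sub_neg_eq_add,
          hsba, hsab, smul_zero, zero_add, add_zero]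
        module] at h
      rw [hsmul, hsmul, hE, hB'] at h
      rw [show Complex.I • star (φ b) * φ a + Complex.I • star (φ b) * star (φ a)
            - φ a * star (Complex.I • star (φ b)) - star (φ a) * star (Complex.I • star (φ b))
            = Complex.I • (star (φ b)*φ a + star (φ b)*star (φ a) + φ a*φ b + star (φ a)*φ b)
            from by
        simp only [star_star, star_smul, Complex.star_def, Complex.conj_I,
          smul_mul_assoc, mul_smul_comm, neg_smul, mul_neg, neg_mul, sub_neg_eq_add]
        module] at h
      exact smul_cancel Complex.I_ne_zero h
    have E1' : φ (a*b) - star (φ (a*b)) =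
        φ a*φ b + star (φ a)*φ b - star (φ b)*φ a - star (φ b)*star (φ a) := by
      rw [show φ a*φ b + star (φ a)*φ b - star (φ b)*φ a - star (φ b)*star (φ a)
            = -(star (φ b)*φ a + star (φ b)*star (φ a) - φ a*φ b - star (φ a)*φ b) by abel,
          ← E1, neg_neg]
    refine add_self_cancel ?_
    calc φ (a*b) + φ (a*b)
        = (φ (a*b) + star (φ (a*b))) + (φ (a*b) - star (φ (a*b))) := by abel
      _ = (star (φ b)*φ a + star (φ b)*star (φ a) + φ a*φ b + star (φ a)*φ b)
          + (φ a*φ b + star (φ a)*φ b - star (φ b)*φ a - star (φ b)*star (φ a)) := by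
            rw [E2, E1']
      _ = (φ a*φ b + star (φ a)*φ b) + (φ a*φ b + star (φ a)*φ b) := by abel
      _ = φ a * φ b + φ a * φ b := by rw [hUB, add_zero]
end
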